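/- Let L : ℝ^p → ℝ be differentiable with β-Lipschitz gradient (β > 0) and bounded below by L*. Let 0 < η ≤ 1/(4β), ρ ≥ 0, and let (w_k)_{k=0}^{K} be generated by w_{k+1} = w_k - η ∇L(w_k + ε_k) for arbitrary perturbations ε_k ∈ ℝ^p with ‖ε_k‖₂ ≤ ρ. Then (1/K) ∑_{k=0}^{K-1} ‖∇L(w_k)‖₂² ≤ 4 (L(w_0) - L*)/(η K) + 3 β² ρ². -/

import Mathlib

open scoped RealInnerProductSpace

lemma descent_lemma {E : Type*} [NormedAddCommGroup E] [InnerProductSpace ℝ E] [CompleteSpace E]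
    (L : E → ℝ) (β : ℝ) (hβ : 0 ≤ β) (hdiff : Differentiable ℝ L)
    (hsmooth : ∀ v v', ‖gradient L v - gradient L v'‖ ≤ β * ‖v - v'‖) (x y : E) :
    L y ≤ L x + ⟪gradient L x, y - x⟫ + β / 2 * ‖y - x‖ ^ 2 := by
  set v := y - x with hv
  have hc : ∀ t : ℝ, HasDerivAt (fun t : ℝ => x + t • v) v t := by
    intro t
    simpa using ((hasDerivAt_id t).smul_const v).const_add x
  have hφ : ∀ t : ℝ, HasDerivAt (fun t : ℝ => L (x + t • v))
      ⟪gradient L (x + t • v), v⟫ t := by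
    intro t
    have h1 := (hdiff (x + t • v)).hasGradientAt.hasFDerivAt
    convert h1.comp_hasDerivAt t (hc t) using 1
    all_goals rfl
  have hgcont : Continuous (gradient L) := by
    refine (LipschitzWith.of_dist_le_mul (K := β.toNNReal) ?_).continuous
    intro a b
    rw [dist_eq_norm, dist_eq_norm]
    calc ‖gradient L a - gradient L b‖ ≤ β * ‖a - b‖ := hsmooth a b
      _ = β.toNNReal * ‖a - b‖ := by rw [Real.coe_toNNReal β hβ]
  have hcont : Continuous fun t : ℝ => (⟪gradient L (x + t • v), v⟫ : ℝ) := by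
    exact (hgcont.comp (continuous_const.add (continuous_id.smul continuous_const))).inner
      continuous_const
  have key : ∫ t in (0:ℝ)..1, ⟪gradient L (x + t • v), v⟫ = L y - L x := by
    have := intervalIntegral.integral_eq_sub_of_hasDerivAt (f := fun t : ℝ => L (x + t • v))
      (fun t _ => hφ t) (hcont.intervalIntegrable 0 1)
    simpa [hv] using this
  have bound : ∫ t in (0:ℝ)..1, ⟪gradient L (x + t • v), v⟫
      ≤ ∫ t in (0:ℝ)..1, (⟪gradient L x, v⟫ + t * (β * ‖v‖ ^ 2)) := by
    apply intervalIntegral.integral_mono_on (by norm_num) (hcont.intervalIntegrable 0 1)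
    · exact (Continuous.intervalIntegrable (by continuity) 0 1)
    · intro t ht
      have h1 : ⟪gradient L (x + t • v), v⟫ - ⟪gradient L x, v⟫
          = ⟪gradient L (x + t • v) - gradient L x, v⟫ := (inner_sub_left _ _ _).symm
      have h2 := real_inner_le_norm (gradient L (x + t • v) - gradient L x) v
      have h3 : ‖gradient L (x + t • v) - gradient L x‖ ≤ β * (t * ‖v‖) := by
        have := hsmooth (x + t • v) x
        simpa [norm_smul, abs_of_nonneg ht.1] using this
      nlinarith [norm_nonneg v, norm_nonneg (gradient L (x + t • v) - gradient L x),
        mul_le_mul_of_nonneg_right h3 (norm_nonneg v)]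
  have comp : ∫ t in (0:ℝ)..1, (⟪gradient L x, v⟫ + t * (β * ‖v‖ ^ 2))
      = ⟪gradient L x, v⟫ + β / 2 * ‖v‖ ^ 2 := by
    rw [intervalIntegral.integral_add (intervalIntegrable_const)
      ((Continuous.intervalIntegrable (by continuity) 0 1))]
    simp [intervalIntegral.integral_mul_const, integral_id]
    ring
  linarith [key ▸ bound, comp ▸ bound]

lemma step_arith (Lk Lk1 a N I β ρ η : ℝ) (hβ : 0 < β) (hρ : 0 ≤ ρ) (ha : 0 ≤ a) (hN : 0 ≤ N)
    (hη0 : 0 < η) (hβη : β * η ≤ 1 / 4)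
    (hd : Lk1 ≤ Lk - η * I + β / 2 * (η * N) ^ 2)
    (hI : a ^ 2 - a * (β * ρ) ≤ I) (hN2 : N ≤ a + β * ρ) :
    Lk1 ≤ Lk - η / 2 * a ^ 2 + 5 / 4 * η * (β ^ 2 * ρ ^ 2) := by
  have h1 : η * (a ^ 2 - a * (β * ρ)) ≤ η * I := mul_le_mul_of_nonneg_left hI hη0.le
  have h2 : η * (a * (β * ρ)) ≤ η * (a ^ 2 / 4 + β ^ 2 * ρ ^ 2) :=
    mul_le_mul_of_nonneg_left (by nlinarith [sq_nonneg (a - 2 * (β * ρ))]) hη0.le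
  have h3 : N ^ 2 ≤ 2 * a ^ 2 + 2 * β ^ 2 * ρ ^ 2 := by
    nlinarith [sq_nonneg (a - β * ρ), mul_nonneg hβ.le hρ]
  have h4 : β / 2 * (η * N) ^ 2 ≤ β * η ^ 2 * (a ^ 2 + β ^ 2 * ρ ^ 2) := by
    nlinarith [mul_le_mul_of_nonneg_left h3 (show (0:ℝ) ≤ β / 2 * η ^ 2 by positivity)]
  have h5 : β * η ^ 2 * (a ^ 2 + β ^ 2 * ρ ^ 2) ≤ η / 4 * (a ^ 2 + β ^ 2 * ρ ^ 2) := by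
    nlinarith [mul_nonneg (mul_nonneg (show (0:ℝ) ≤ 1 / 4 - β * η by linarith) hη0.le)
      (show (0:ℝ) ≤ a ^ 2 + β ^ 2 * ρ ^ 2 by positivity)]
  nlinarith [h1, h2, h4, h5, hd]

/-- Deterministic convergence of perturbed gradient descent
(zero-noise SAST): if `L` is differentiable with `β`-Lipschitz gradient
(`β > 0`), bounded below by `L*`, `0 < η ≤ 1/(4β)`, and
`w_{k+1} = w_k - η ∇L(w_k + ε_k)` with `‖ε_k‖ ≤ ρ`, then for every `K ≥ 1`,
`(1/K) ∑_{k<K} ‖∇L(w_k)‖² ≤ 4(L(w_0) - L*)/(ηK) + 3β²ρ²`. -/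
theorem sast_deterministic_convergence
    (p : ℕ) (hp : 1 ≤ p)
    (L : EuclideanSpace ℝ (Fin p) → ℝ) (β ρ η Lstar : ℝ)
    (hβ : 0 < β) (hρ : 0 ≤ ρ)
    (hdiff : Differentiable ℝ L)
    (hsmooth : ∀ v v', ‖gradient L v - gradient L v'‖ ≤ β * ‖v - v'‖)
    (hbdd : ∀ v, Lstar ≤ L v)
    (hη0 : 0 < η) (hη : η ≤ 1 / (4 * β))
    (w ε : ℕ → EuclideanSpace ℝ (Fin p))
    (hε : ∀ k, ‖ε k‖ ≤ ρ)
    (hupdate : ∀ k, w (k + 1) = w k - η • gradient L (w k + ε k)) :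
    ∀ K : ℕ, 1 ≤ K →
      (1 / (K : ℝ)) * ∑ k ∈ Finset.range K, ‖gradient L (w k)‖ ^ 2
        ≤ 4 * (L (w 0) - Lstar) / (η * K) + 3 * β ^ 2 * ρ ^ 2 := by
  have h4β : (0:ℝ) < 4 * β := by linarith
  have hβη : β * η ≤ 1 / 4 := by
    rw [le_div_iff₀ h4β] at hη
    nlinarith
  have step : ∀ k, L (w (k + 1)) ≤ L (w k) - η / 2 * ‖gradient L (w k)‖ ^ 2
      + 5 / 4 * η * (β ^ 2 * ρ ^ 2) := by
    intro k
    have hd := descent_lemma L β hβ.le hdiff hsmooth (w k) (w (k + 1))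
    have hdiffv : w (k + 1) - w k = -(η • gradient L (w k + ε k)) := by
      rw [hupdate k]; abel
    have hinner : ⟪gradient L (w k), w (k + 1) - w k⟫
        = -(η * ⟪gradient L (w k), gradient L (w k + ε k)⟫) := by
      rw [hdiffv, inner_neg_right, real_inner_smul_right]
    have hnorm : ‖w (k + 1) - w k‖ = η * ‖gradient L (w k + ε k)‖ := by
      rw [hdiffv, norm_neg, norm_smul, Real.norm_eq_abs, abs_of_pos hη0]
    rw [hinner, hnorm] at hd
    have hGg : ‖gradient L (w k + ε k) - gradient L (w k)‖ ≤ β * ρ := by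
      have h := hsmooth (w k + ε k) (w k)
      simp only [add_sub_cancel_left] at h
      exact h.trans (mul_le_mul_of_nonneg_left (hε k) hβ.le)
    have hig : ⟪gradient L (w k), gradient L (w k + ε k)⟫
        = ‖gradient L (w k)‖ ^ 2
          + ⟪gradient L (w k), gradient L (w k + ε k) - gradient L (w k)⟫ := by
      rw [inner_sub_right, real_inner_self_eq_norm_sq]; ring
    have hig2 : -(‖gradient L (w k)‖ * (β * ρ))
        ≤ ⟪gradient L (w k), gradient L (w k + ε k) - gradient L (w k)⟫ := by
      have h1 := abs_real_inner_le_norm (gradient L (w k))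
        (gradient L (w k + ε k) - gradient L (w k))
      have h2 := mul_le_mul_of_nonneg_left hGg (norm_nonneg (gradient L (w k)))
      have h3 := neg_abs_le
        (⟪gradient L (w k), gradient L (w k + ε k) - gradient L (w k)⟫ : ℝ)
      linarith
    have hGle : ‖gradient L (w k + ε k)‖ ≤ ‖gradient L (w k)‖ + β * ρ := by
      have : gradient L (w k + ε k)
          = gradient L (w k) + (gradient L (w k + ε k) - gradient L (w k)) := by abel
      calc ‖gradient L (w k + ε k)‖
          = ‖gradient L (w k) + (gradient L (w k + ε k) - gradient L (w k))‖ := by rw [← this]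
        _ ≤ ‖gradient L (w k)‖ + ‖gradient L (w k + ε k) - gradient L (w k)‖ := norm_add_le _ _
        _ ≤ ‖gradient L (w k)‖ + β * ρ := by linarith
    exact step_arith (L (w k)) (L (w (k + 1))) (‖gradient L (w k)‖)
      (‖gradient L (w k + ε k)‖) (⟪gradient L (w k), gradient L (w k + ε k)⟫)
      β ρ η hβ hρ (norm_nonneg _) (norm_nonneg _) hη0 hβη hd (by linarith) hGle
  have sum_bound : ∀ K : ℕ, η / 2 * ∑ k ∈ Finset.range K, ‖gradient L (w k)‖ ^ 2
      ≤ L (w 0) - L (w K) + K * (5 / 4 * η * (β ^ 2 * ρ ^ 2)) := by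
    intro K
    induction K with
    | zero => simp
    | succ n ih =>
      rw [Finset.sum_range_succ, mul_add]
      push_cast
      have := step n
      nlinarith
  intro K hK
  have hKpos : (0 : ℝ) < K := by exact_mod_cast hK
  have hD : 0 ≤ L (w 0) - Lstar := sub_nonneg.2 (hbdd _)
  set S := ∑ k ∈ Finset.range K, ‖gradient L (w k)‖ ^ 2 with hS
  have h1 : η / 2 * S ≤ (L (w 0) - Lstar) + K * (5 / 4 * η * (β ^ 2 * ρ ^ 2)) := by
    have h := sum_bound K
    have h' := hbdd (w K)
    linarith
  have h2 : S ≤ 2 / η * (L (w 0) - Lstar) + K * (5 / 2 * (β ^ 2 * ρ ^ 2)) := by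
    have h3 := mul_le_mul_of_nonneg_left h1 (le_of_lt (by positivity : (0:ℝ) < 2 / η))
    calc S = 2 / η * (η / 2 * S) := by field_simp
      _ ≤ 2 / η * ((L (w 0) - Lstar) + K * (5 / 4 * η * (β ^ 2 * ρ ^ 2))) := h3
      _ = 2 / η * (L (w 0) - Lstar) + K * (5 / 2 * (β ^ 2 * ρ ^ 2)) := by field_simp; ring
  have h4 : 1 / (K : ℝ) * S
      ≤ 1 / (K : ℝ) * (2 / η * (L (w 0) - Lstar) + K * (5 / 2 * (β ^ 2 * ρ ^ 2))) :=
    mul_le_mul_of_nonneg_left h2 (by positivity)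
  have h5 : 1 / (K : ℝ) * (2 / η * (L (w 0) - Lstar) + K * (5 / 2 * (β ^ 2 * ρ ^ 2)))
      = 2 * (L (w 0) - Lstar) / (η * K) + 5 / 2 * (β ^ 2 * ρ ^ 2) := by
    field_simp
  have h6 : 2 * (L (w 0) - Lstar) / (η * K) ≤ 4 * (L (w 0) - Lstar) / (η * K) := by
    apply div_le_div_of_nonneg_right ?_ (by positivity)
    linarith
  have hq : (0:ℝ) ≤ β ^ 2 * ρ ^ 2 := by positivity
  calc 1 / (K : ℝ) * S ≤ 2 * (L (w 0) - Lstar) / (η * K) + 5 / 2 * (β ^ 2 * ρ ^ 2) := by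
        rw [← h5]; exact h4
    _ ≤ 4 * (L (w 0) - Lstar) / (η * K) + 3 * β ^ 2 * ρ ^ 2 := by linarith
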